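/- Fix d, k ∈ ℕ and Z = (U, V) with U, V : Fin d → EuclideanSpace ℝ (Fin k) such that ⟪u_i, v_j⟫ ≠ 0 for all i ≠ j. Let L be a function from zero-diagonal binary d × d matrices to ℝ with L(G) > 0 for all G, and let f be any real-valued function on such matrices. Then lim_{α→∞} (∑_G p_α(G | Z) · L(G) · f(G)) / (∑_G p_α(G | Z) · L(G)) = f(G_∞(Z)), where the sums range over all zero-diagonal binary matrices G. -/

import Mathlib

open Filter

/-- Sigmoid with inverse temperature `α`: `σ_α(x) = 1 / (1 + exp (−α x))`. -/
noncomputable def sigmoidAlpha (α x : ℝ) : ℝ := (1 + Real.exp (-(α * x)))⁻¹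

/-- The DiBS latent graph model probability `p_α(G | Z)`. -/
noncomputable def pAlpha {d k : ℕ} (α : ℝ) (U V : Fin d → EuclideanSpace ℝ (Fin k))
    (G : Fin d → Fin d → Bool) : ℝ :=
  ∏ i, ∏ j,
    if i = j then 1
    else
      sigmoidAlpha α (inner ℝ (U i) (V j)) ^ (G i j).toNat *
        (1 - sigmoidAlpha α (inner ℝ (U i) (V j))) ^ (1 - (G i j).toNat)

/-- Zero-diagonal binary `d × d` matrices. -/
def ZeroDiagGraph (d : ℕ) : Type := {G : Fin d → Fin d → Bool // ∀ i, G i i = false}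

instance (d : ℕ) : Fintype (ZeroDiagGraph d) := Subtype.fintype _

/-- The limiting graph `G_∞(Z)` as a zero-diagonal binary matrix. -/
noncomputable def gInftyZ {d k : ℕ} (U V : Fin d → EuclideanSpace ℝ (Fin k)) :
    ZeroDiagGraph d :=
  ⟨fun i j => decide (i ≠ j ∧ 0 < (inner ℝ (U i) (V j) : ℝ)), fun i => by simp⟩

lemma sigmoid_tendsto_one {x : ℝ} (hx : 0 < x) :
    Tendsto (fun α : ℝ => (1 + Real.exp (-(α * x)))⁻¹) atTop (nhds 1) := by
  have h1 : Tendsto (fun α : ℝ => -(α * x)) atTop atBot := by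
    apply tendsto_neg_atBot_iff.mpr
    exact Tendsto.atTop_mul_const hx tendsto_id
  have h2 : Tendsto (fun α : ℝ => Real.exp (-(α * x))) atTop (nhds 0) :=
    Real.tendsto_exp_atBot.comp h1
  have h3 : Tendsto (fun α : ℝ => 1 + Real.exp (-(α * x))) atTop (nhds 1) := by
    simpa using (tendsto_const_nhds.add h2)
  simpa using h3.inv₀ one_ne_zero

lemma sigmoid_tendsto_zero {x : ℝ} (hx : x < 0) :
    Tendsto (fun α : ℝ => (1 + Real.exp (-(α * x)))⁻¹) atTop (nhds 0) := by
  have h1 : Tendsto (fun α : ℝ => -(α * x)) atTop atTop := by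
    simpa using Tendsto.atTop_mul_const (by linarith : (0:ℝ) < -x) (tendsto_id : Tendsto id atTop atTop)
  have h2 : Tendsto (fun α : ℝ => Real.exp (-(α * x))) atTop atTop :=
    Real.tendsto_exp_atTop.comp h1
  have h3 : Tendsto (fun α : ℝ => 1 + Real.exp (-(α * x))) atTop atTop :=
    tendsto_atTop_add_const_left _ 1 h2
  exact tendsto_inv_atTop_zero.comp h3


open scoped Classical in
lemma pAlpha_tendsto {d k : ℕ} (U V : Fin d → EuclideanSpace ℝ (Fin k))
    (hne : ∀ i j : Fin d, i ≠ j → (inner ℝ (U i) (V j) : ℝ) ≠ 0)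
    (G : ZeroDiagGraph d) :
    Tendsto (fun α : ℝ => pAlpha α U V G.1) atTop
      (nhds (if G = gInftyZ U V then 1 else 0)) := by
  have key : Tendsto (fun α : ℝ => pAlpha α U V G.1) atTop
      (nhds (∏ i, ∏ j, if i = j then (1:ℝ)
        else if G.1 i j = decide (0 < (inner ℝ (U i) (V j) : ℝ)) then 1 else 0)) := by
    unfold pAlpha
    apply tendsto_finset_prod
    intro i _
    apply tendsto_finset_prod
    intro j _
    by_cases hij : i = j
    · simp [hij]
    · simp only [if_neg hij]
      set x : ℝ := inner ℝ (U i) (V j) with hx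
      have hσ1 : 0 < x → Tendsto (fun α : ℝ => sigmoidAlpha α x) atTop (nhds 1) := by
        intro h; exact sigmoid_tendsto_one h
      have hσ0 : x < 0 → Tendsto (fun α : ℝ => sigmoidAlpha α x) atTop (nhds 0) := by
        intro h; exact sigmoid_tendsto_zero h
      rcases (show x ≠ 0 from hne i j hij).lt_or_gt with h | h
      · -- x < 0 : σ → 0
        cases hGij : G.1 i j
        · simp only [hGij, Bool.toNat_false, pow_zero, pow_one, one_mul,
            decide_eq_false_iff_not, not_lt] at *
          have : Tendsto (fun α : ℝ => 1 - sigmoidAlpha α x) atTop (nhds 1) := by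
            simpa using ((tendsto_const_nhds : Tendsto (fun _ : ℝ => (1:ℝ)) atTop (nhds 1)).sub (hσ0 h))
          simpa [h.le] using this
        · simp only [hGij, Bool.toNat_true, pow_one, Nat.sub_self, pow_zero, mul_one]
          have := hσ0 h
          have hd : (decide (0 < x)) = false := by simp [not_lt.mpr h.le]
          simpa [hd] using this
      · -- 0 < x : σ → 1
        cases hGij : G.1 i j
        · simp only [hGij, Bool.toNat_false, pow_zero, one_mul, pow_one]
          have : Tendsto (fun α : ℝ => 1 - sigmoidAlpha α x) atTop (nhds 0) := by
            simpa using ((tendsto_const_nhds : Tendsto (fun _ : ℝ => (1:ℝ)) atTop (nhds 1)).sub (hσ1 h))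
          have hd : (decide (0 < x)) = true := by simp [h]
          simpa [hd] using this
        · simp only [hGij, Bool.toNat_true, pow_one, Nat.sub_self, pow_zero, mul_one]
          have hd : (decide (0 < x)) = true := by simp [h]
          simpa [hd] using hσ1 h
  convert key using 2
  by_cases hG : G = gInftyZ U V
  · rw [if_pos hG]
    symm
    apply Finset.prod_eq_one
    intro i _
    apply Finset.prod_eq_one
    intro j _
    by_cases hij : i = j
    · simp [hij]
    · have : G.1 i j = decide (0 < (inner ℝ (U i) (V j) : ℝ)) := by
        rw [hG]
        simp [gInftyZ, hij]
      simp [hij, this]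
  · rw [if_neg hG]
    symm
    have : ∃ i j, G.1 i j ≠ (gInftyZ U V).1 i j := by
      by_contra h
      push_neg at h
      exact hG (Subtype.ext (funext fun i => funext fun j => h i j))
    obtain ⟨i, j, hij0⟩ := this
    have hij : i ≠ j := by
      rintro rfl
      exact hij0 (by rw [G.2, (gInftyZ U V).2])
    apply Finset.prod_eq_zero (Finset.mem_univ i)
    apply Finset.prod_eq_zero (Finset.mem_univ j)
    have : G.1 i j ≠ decide (0 < (inner ℝ (U i) (V j) : ℝ)) := by
      intro h
      apply hij0
      rw [h]
      simp [gInftyZ, hij]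
    rw [if_neg hij, if_neg this]

/-- Limits (A.27)–(A.29) of DiBS (marginal case of equation (5.1)): as `α → ∞`,
`(∑_G p_α(G|Z) L(G) f(G)) / (∑_G p_α(G|Z) L(G)) → f(G_∞(Z))` for positive `L`,
provided no inner product `⟪u_i, v_j⟫` (for `i ≠ j`) vanishes. -/
theorem pAlpha_weighted_expectation_tendsto {d k : ℕ}
    (U V : Fin d → EuclideanSpace ℝ (Fin k))
    (hne : ∀ i j : Fin d, i ≠ j → (inner ℝ (U i) (V j) : ℝ) ≠ 0)
    (L : ZeroDiagGraph d → ℝ) (hL : ∀ G, 0 < L G)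
    (f : ZeroDiagGraph d → ℝ) :
    Tendsto (fun α : ℝ =>
        (∑ G : ZeroDiagGraph d, pAlpha α U V G.1 * L G * f G) /
          (∑ G : ZeroDiagGraph d, pAlpha α U V G.1 * L G)) atTop
      (nhds (f (gInftyZ U V))) := by
  classical
  set a := gInftyZ U V
  have hnum : Tendsto (fun α : ℝ => ∑ G : ZeroDiagGraph d, pAlpha α U V G.1 * L G * f G)
      atTop (nhds (L a * f a)) := by
    have := tendsto_finset_sum (Finset.univ : Finset (ZeroDiagGraph d))
      (fun G _ => ((pAlpha_tendsto U V hne G).mul_const (L G)).mul_const (f G))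
    convert this using 2
    rw [Finset.sum_eq_single a]
    · simp
      exact fun h => absurd rfl h
    · intro G _ hG; simp [hG]
      exact fun h => absurd h hG
    · simp
  have hden : Tendsto (fun α : ℝ => ∑ G : ZeroDiagGraph d, pAlpha α U V G.1 * L G)
      atTop (nhds (L a)) := by
    have := tendsto_finset_sum (Finset.univ : Finset (ZeroDiagGraph d))
      (fun G _ => (pAlpha_tendsto U V hne G).mul_const (L G))
    convert this using 2
    rw [Finset.sum_eq_single a]
    · simp
      exact fun h => absurd rfl h
    · intro G _ hG; simp [hG]
      exact fun h => absurd h hG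
    · simp
  have := hnum.div hden (ne_of_gt (hL a))
  convert this using 2
  · rfl
  rw [mul_comm, mul_div_assoc, div_self (ne_of_gt (hL a)), mul_one]
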